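/- Let (Ω, m₀, μ) be a probability space, m ≤ m₀ a sub-σ-algebra, and Z a square-integrable real random variable with Var(μ[Z|m]) > 0. Then Var(μ[Z|m]) is the greatest element of the set { Cov(Z, T)² / Var(T) : T a square-integrable, m-measurable real random variable with Var(T) > 0 }; in particular the maximum is attained at T = μ[Z|m], for which Cov(Z, μ[Z|m]) = Var(μ[Z|m]). Consequently, if also Var(Z) > 0, the supremum of the squared correlations Corr²(Z, T) = Cov(Z,T)²/(Var(Z)Var(T)) over such T equals Var(μ[Z|m]) / Var(Z). -/

import Mathlib

open MeasureTheory ProbabilityTheory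

/-- The covariance `Cov(X, Y) = E[XY] − E[X]E[Y]` of two real random variables. -/
noncomputable def cov {Ω : Type*} [MeasurableSpace Ω] (μ : Measure Ω) (X Y : Ω → ℝ) : ℝ :=
  (∫ ω, X ω * Y ω ∂μ) - (∫ ω, X ω ∂μ) * (∫ ω, Y ω ∂μ)

section Aux

variable {Ω : Type*} {m : MeasurableSpace Ω} {m₀ : MeasurableSpace Ω} {μ : Measure Ω}
  [IsProbabilityMeasure μ]

lemma integrable_mul_of_memL2 {X Y : Ω → ℝ} (hX : MemLp X 2 μ) (hY : MemLp Y 2 μ) :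
    Integrable (fun ω => X ω * Y ω) μ := by
  have h := L2.integrable_inner (𝕜 := ℝ) (hX.toLp X) (hY.toLp Y)
  refine h.congr ?_
  filter_upwards [hX.coeFn_toLp, hY.coeFn_toLp] with ω h1 h2
  simp [h1, h2, RCLike.inner_apply, mul_comm]

lemma cov_self {X : Ω → ℝ} (hX : MemLp X 2 μ) : cov μ X X = variance X μ := by
  rw [variance_eq_sub hX, cov]
  simp [sq]

lemma cov_eq_integral_centered {X Y : Ω → ℝ} (hX : MemLp X 2 μ) (hY : MemLp Y 2 μ) :
    cov μ X Y = ∫ ω, (X ω - ∫ a, X a ∂μ) * (Y ω - ∫ a, Y a ∂μ) ∂μ := by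
  set a := ∫ a, X a ∂μ with ha
  set b := ∫ a, Y a ∂μ with hb
  have hXY := integrable_mul_of_memL2 hX hY
  have hXi := hX.integrable (by norm_num : (1:ENNReal) ≤ 2)
  have hYi := hY.integrable (by norm_num : (1:ENNReal) ≤ 2)
  have hpt : ∀ ω, (X ω - a) * (Y ω - b)
      = X ω * Y ω - (a * Y ω + (b * X ω - a * b)) := by intro ω; ring
  have I3 : Integrable (fun ω => b * X ω - a * b) μ := (hXi.const_mul b).sub (integrable_const _)
  have I2 : Integrable (fun ω => a * Y ω + (b * X ω - a * b)) μ := (hYi.const_mul a).add I3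
  rw [show (∫ ω, (X ω - a) * (Y ω - b) ∂μ)
      = ∫ ω, (X ω * Y ω - (a * Y ω + (b * X ω - a * b))) ∂μ from
    integral_congr_ae (Filter.Eventually.of_forall fun ω => hpt ω)]
  rw [integral_sub hXY I2, integral_add (hYi.const_mul a) I3,
      integral_sub (hXi.const_mul b) (integrable_const _), integral_const_mul,
      integral_const_mul, integral_const]
  simp only [probReal_univ, measure_univ, ENNReal.toReal_one, one_smul, cov, ← ha, ← hb]
  ring

lemma cov_sq_le_var_mul_var {X Y : Ω → ℝ} (hX : MemLp X 2 μ) (hY : MemLp Y 2 μ) :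
    cov μ X Y ^ 2 ≤ variance X μ * variance Y μ := by
  have hXc : MemLp (fun ω => X ω - ∫ a, X a ∂μ) 2 μ := hX.sub (memLp_const _)
  have hYc : MemLp (fun ω => Y ω - ∫ a, Y a ∂μ) 2 μ := hY.sub (memLp_const _)
  set f := hXc.toLp _ with hf
  set g := hYc.toLp _ with hg
  have hfg : inner (𝕜 := ℝ) f g = cov μ X Y := by
    rw [L2.inner_def, cov_eq_integral_centered hX hY]
    refine integral_congr_ae ?_
    filter_upwards [hXc.coeFn_toLp, hYc.coeFn_toLp] with ω h1 h2
    simp [hf, hg, h1, h2, RCLike.inner_apply, mul_comm]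
  have hff : inner (𝕜 := ℝ) f f = variance X μ := by
    rw [L2.inner_def, ← cov_self hX, cov_eq_integral_centered hX hX]
    refine integral_congr_ae ?_
    filter_upwards [hXc.coeFn_toLp] with ω h1
    simp [hf, h1, RCLike.inner_apply, sq]
  have hgg : inner (𝕜 := ℝ) g g = variance Y μ := by
    rw [L2.inner_def, ← cov_self hY, cov_eq_integral_centered hY hY]
    refine integral_congr_ae ?_
    filter_upwards [hYc.coeFn_toLp] with ω h1
    simp [hg, h1, RCLike.inner_apply, sq]
  have h := real_inner_mul_inner_self_le f g
  rw [hfg, hff, hgg] at h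
  nlinarith [h]

lemma memL2_condexp (hm : m ≤ m₀) {Z : Ω → ℝ} (hZ : MemLp Z 2 μ) :
    MemLp (μ[Z|m]) 2 μ := by
  set g : Lp ℝ 2 μ := (condExpL2 ℝ ℝ hm (hZ.toLp Z) : Lp ℝ 2 μ) with hgdef
  have hae : (g : Ω → ℝ) =ᵐ[μ] μ[Z|m] := by
    refine ae_eq_condExp_of_forall_setIntegral_eq hm
      (hZ.integrable (by norm_num : (1:ENNReal) ≤ 2))
      (fun s hs hμs => integrableOn_Lp_of_measure_ne_top g (by norm_num) hμs.ne)
      (fun s hs hμs => ?_) ?_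
    · rw [hgdef]
      rw [integral_condExpL2_eq hm (hZ.toLp Z) hs hμs.ne]
      exact setIntegral_congr_ae (hm s hs) (hZ.coeFn_toLp.mono fun ω h _ => h)
    · exact aestronglyMeasurable_condExpL2 hm _
  exact (Lp.memLp g).ae_eq hae

lemma integral_mul_condexp (hm : m ≤ m₀) {Z T : Ω → ℝ}
    (hZ : MemLp Z 2 μ) (hT : MemLp T 2 μ) (hTm : StronglyMeasurable[m] T) :
    ∫ ω, Z ω * T ω ∂μ = ∫ ω, (μ[Z|m]) ω * T ω ∂μ := by
  have h1 : Integrable (T * Z) μ := by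
    exact integrable_mul_of_memL2 hT hZ
  have h2 := condExp_mul_of_stronglyMeasurable_left (μ := μ) hTm h1
    (hZ.integrable (by norm_num : (1:ENNReal) ≤ 2))
  calc ∫ ω, Z ω * T ω ∂μ = ∫ ω, (T * Z) ω ∂μ := by simp [Pi.mul_apply, mul_comm]
    _ = ∫ ω, (μ[T * Z|m]) ω ∂μ := (integral_condExp hm).symm
    _ = ∫ ω, (T * μ[Z|m]) ω ∂μ := integral_congr_ae h2
    _ = ∫ ω, (μ[Z|m]) ω * T ω ∂μ := by simp [Pi.mul_apply, mul_comm]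

lemma cov_condexp (hm : m ≤ m₀) {Z T : Ω → ℝ}
    (hZ : MemLp Z 2 μ) (hT : MemLp T 2 μ) (hTm : StronglyMeasurable[m] T) :
    cov μ Z T = cov μ (μ[Z|m]) T := by
  unfold cov
  rw [integral_mul_condexp hm hZ hT hTm, integral_condExp hm]

end Aux

/-- For a probability space `(Ω, m₀, μ)`, a sub-σ-algebra `m ≤ m₀`, and a
square-integrable real random variable `Z` with `Var(μ[Z|m]) > 0`, the quantity
`Var(μ[Z|m])` is the greatest element of `{Cov(Z, T)²/Var(T)}` over square-integrable
`m`-measurable `T` with `Var(T) > 0`; the maximum is attained at `T = μ[Z|m]`, for which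
`Cov(Z, μ[Z|m]) = Var(μ[Z|m])`; and if moreover `Var(Z) > 0`, the supremum of the squared
correlations `Corr²(Z, T)` over such `T` equals `Var(μ[Z|m]) / Var(Z)`. -/
theorem stmt_4 {Ω : Type*} (m : MeasurableSpace Ω) {m₀ : MeasurableSpace Ω}
    (hm : m ≤ m₀) (μ : Measure Ω) [IsProbabilityMeasure μ] (Z : Ω → ℝ)
    (hZ : MemLp Z 2 μ) (hvar : 0 < variance (μ[Z|m]) μ) :
    IsGreatest
      {r : ℝ | ∃ T : Ω → ℝ, MemLp T 2 μ ∧ StronglyMeasurable[m] T ∧ 0 < variance T μ ∧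
        r = cov μ Z T ^ 2 / variance T μ}
      (variance (μ[Z|m]) μ) ∧
    cov μ Z (μ[Z|m]) = variance (μ[Z|m]) μ ∧
    (0 < variance Z μ →
      sSup {r : ℝ | ∃ T : Ω → ℝ, MemLp T 2 μ ∧ StronglyMeasurable[m] T ∧ 0 < variance T μ ∧
          r = cov μ Z T ^ 2 / (variance Z μ * variance T μ)}
        = variance (μ[Z|m]) μ / variance Z μ) := by
  set Y := μ[Z|m] with hY
  have hY2 : MemLp Y 2 μ := memL2_condexp hm hZ
  have hYm : StronglyMeasurable[m] Y := stronglyMeasurable_condExp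
  have hcovZY : cov μ Z Y = variance Y μ := by
    rw [cov_condexp hm hZ hY2 hYm, cov_self hY2]
  have hbound : ∀ T : Ω → ℝ, MemLp T 2 μ → StronglyMeasurable[m] T → 0 < variance T μ →
      cov μ Z T ^ 2 / variance T μ ≤ variance Y μ := by
    intro T hT hTm hTvar
    rw [cov_condexp hm hZ hT hTm]
    rw [div_le_iff₀ hTvar]
    exact cov_sq_le_var_mul_var hY2 hT
  have hGreatest : IsGreatest
      {r : ℝ | ∃ T : Ω → ℝ, MemLp T 2 μ ∧ StronglyMeasurable[m] T ∧ 0 < variance T μ ∧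
        r = cov μ Z T ^ 2 / variance T μ} (variance Y μ) := by
    constructor
    · exact ⟨Y, hY2, hYm, hvar, by
        rw [hcovZY, sq, mul_div_assoc, div_self hvar.ne', mul_one]⟩
    · rintro r ⟨T, hT, hTm, hTvar, rfl⟩
      exact hbound T hT hTm hTvar
  refine ⟨hGreatest, hcovZY, fun hZvar => ?_⟩
  have hG2 : IsGreatest
      {r : ℝ | ∃ T : Ω → ℝ, MemLp T 2 μ ∧ StronglyMeasurable[m] T ∧ 0 < variance T μ ∧
        r = cov μ Z T ^ 2 / (variance Z μ * variance T μ)} (variance Y μ / variance Z μ) := by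
    constructor
    · refine ⟨Y, hY2, hYm, hvar, ?_⟩
      rw [hcovZY]
      field_simp
    · rintro r ⟨T, hT, hTm, hTvar, rfl⟩
      rw [mul_comm (variance Z μ), ← div_div]
      exact (div_le_div_iff_of_pos_right hZvar).mpr (hbound T hT hTm hTvar)
  exact hG2.csSup_eq
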